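/- Let N be a normal subgroup of a finite group G such that G/N is abelian, and let π be an irreducible finite-dimensional complex representation of N. Then all irreducible constituents of the induced representation Ind_N^G(π) appear in it with the same multiplicity; equivalently (by Frobenius reciprocity), for any two irreducible finite-dimensional complex representations σ and τ of G such that Hom_N(π, Res_N σ) ≠ 0 and Hom_N(π, Res_N τ) ≠ 0, one has dim Hom_N(π, Res_N σ) = dim Hom_N(π, Res_N τ). -/

import Mathlib

noncomputable section

namespace RestrictionMult

variable {G : Type*} [Group G]

/-- The submodule of equivariant linear maps between two representations. -/
def equivariantHoms {V W : Type*} [AddCommGroup V] [Module ℂ V]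
    [AddCommGroup W] [Module ℂ W]
    (π : Representation ℂ G V) (σ : Representation ℂ G W) :
    Submodule ℂ (V →ₗ[ℂ] W) where
  carrier := {f | ∀ g v, f (π g v) = σ g (f v)}
  add_mem' := by intro f₁ f₂ h₁ h₂ g v; simp [h₁ g v, h₂ g v]
  zero_mem' := by intro g v; simp
  smul_mem' := by intro c f hf g v; simp [hf g v]

/-- Two representations are equivalent (isomorphic). -/
def IsRepEquiv {V W : Type*} [AddCommGroup V] [Module ℂ V]
    [AddCommGroup W] [Module ℂ W]
    (π : Representation ℂ G V) (σ : Representation ℂ G W) : Prop :=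
  ∃ e : V ≃ₗ[ℂ] W, ∀ g v, e (π g v) = σ g (e v)

/-- A representation is irreducible if the space is nonzero and the only invariant
submodules are `⊥` and `⊤`. -/
def IsIrreducibleRep {V : Type*} [AddCommGroup V] [Module ℂ V]
    (π : Representation ℂ G V) : Prop :=
  (∃ v : V, v ≠ 0) ∧
    ∀ U : Submodule ℂ V, (∀ g, ∀ v ∈ U, π g v ∈ U) → U = ⊥ ∨ U = ⊤

/-- The twist of a representation by a character `χ : G →* ℂˣ`. -/
def twist {V : Type*} [AddCommGroup V] [Module ℂ V]
    (π : Representation ℂ G V) (χ : G →* ℂˣ) : Representation ℂ G V where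
  toFun g := (χ g : ℂ) • π g
  map_one' := by simp
  map_mul' g h := by
    ext v
    simp only [Module.End.mul_apply, LinearMap.smul_apply, map_smul, map_mul, Units.val_mul,
      mul_smul]
    rw [smul_comm]

/-- The direct sum of two representations. -/
def dsum {V W : Type*} [AddCommGroup V] [Module ℂ V]
    [AddCommGroup W] [Module ℂ W]
    (π : Representation ℂ G V) (σ : Representation ℂ G W) :
    Representation ℂ G (V × W) where
  toFun g := (π g).prodMap (σ g)
  map_one' := by ext v <;> simp
  map_mul' g h := by ext v <;> simp [Module.End.mul_apply]

/-- The subrepresentation on an invariant submodule. -/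
def resSub {V : Type*} [AddCommGroup V] [Module ℂ V]
    (π : Representation ℂ G V) (U : Submodule ℂ V)
    (hU : ∀ g, ∀ v ∈ U, π g v ∈ U) : Representation ℂ G U where
  toFun g := (π g).restrict (fun v hv => hU g v hv)
  map_one' := by ext v; simp [LinearMap.restrict_apply]
  map_mul' g h := by ext v; simp [LinearMap.restrict_apply, Module.End.mul_apply]

/-- The conjugate `π^g` of a representation of a normal subgroup `N`,
given by `x ↦ π (g⁻¹ x g)`. -/
def conjRep {N : Subgroup G} [N.Normal] {V : Type*} [AddCommGroup V] [Module ℂ V]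
    (π : Representation ℂ N V) (g : G) : Representation ℂ N V :=
  π.comp (MulAut.conjNormal g⁻¹ : N ≃* N).toMonoidHom

/-- The space of the representation of `G` induced from a representation of a
subgroup `N`: functions `f : G → V` with `f (n * x) = π n (f x)`. -/
def indSubmodule (N : Subgroup G) {V : Type*} [AddCommGroup V] [Module ℂ V]
    (π : Representation ℂ N V) : Submodule ℂ (G → V) where
  carrier := {f | ∀ (n : N) (x : G), f (n * x) = π n (f x)}
  add_mem' := by intro f₁ f₂ h₁ h₂ n x; simp [h₁ n x, h₂ n x]
  zero_mem' := by intro n x; simp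
  smul_mem' := by intro c f hf n x; simp [hf n x]

/-- The representation of `G` induced from a representation `π` of a subgroup `N`,
acting by right translation on `indSubmodule N π`. -/
def ind (N : Subgroup G) {V : Type*} [AddCommGroup V] [Module ℂ V]
    (π : Representation ℂ N V) : Representation ℂ G (indSubmodule N π) where
  toFun g :=
    { toFun := fun f => ⟨fun x => (f : G → V) (x * g),
        fun n x => by simpa [mul_assoc] using f.2 n (x * g)⟩
      map_add' := fun f₁ f₂ => by ext x; rfl
      map_smul' := fun c f => by ext x; rfl }
  map_one' := by ext f x; simp
  map_mul' g h := by ext f x; simp [Module.End.mul_apply, mul_assoc]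



section Aux

theorem mem_equivariantHoms {G : Type*} [Group G] {V W : Type*} [AddCommGroup V] [Module ℂ V]
    [AddCommGroup W] [Module ℂ W]
    {π : Representation ℂ G V} {σ : Representation ℂ G W} {f : V →ₗ[ℂ] W} :
    f ∈ equivariantHoms π σ ↔ ∀ g v, f (π g v) = σ g (f v) := Iff.rfl


universe u v

theorem exists_common_eigenvector :
    ∀ (n : ℕ) {W : Type u} [AddCommGroup W] [Module ℂ W] [FiniteDimensional ℂ W]
    {ι : Type v}, Module.finrank ℂ W ≤ n → ∀ (T : ι → Module.End ℂ W),
    (∀ i j, Commute (T i) (T j)) → ∀ (w₀ : W), w₀ ≠ 0 →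
    ∃ w : W, w ≠ 0 ∧ ∀ i, ∃ c : ℂ, T i w = c • w := by
  intro n
  induction n with
  | zero =>
    intro W _ _ _ ι hn T hT w₀ hw₀
    have : Nontrivial W := ⟨w₀, 0, hw₀⟩
    have := Module.finrank_pos (R := ℂ) (M := W)
    omega
  | succ n ih =>
    intro W _ _ _ ι hn T hT w₀ hw₀
    by_cases hsc : ∀ i, ∃ c : ℂ, ∀ w : W, T i w = c • w
    · exact ⟨w₀, hw₀, fun i => (hsc i).imp fun c hc => hc w₀⟩
    push_neg at hsc
    obtain ⟨i₀, hi₀⟩ := hsc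
    have : Nontrivial W := ⟨w₀, 0, hw₀⟩
    obtain ⟨μ, hμ⟩ := Module.End.exists_eigenvalue (T i₀)
    set E := Module.End.eigenspace (T i₀) μ with hE
    have hmap : ∀ i, ∀ x ∈ E, T i x ∈ E := by
      intro i x hx
      rw [hE, Module.End.mem_eigenspace_iff] at hx ⊢
      calc T i₀ (T i x) = (T i₀ * T i) x := rfl
        _ = (T i * T i₀) x := by rw [(hT i₀ i).eq]
        _ = T i (μ • x) := by rw [Module.End.mul_apply, hx]
        _ = μ • T i x := map_smul _ _ _
    have hEtop : E ≠ ⊤ := by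
      intro h
      obtain ⟨w, hw⟩ := hi₀ μ
      exact hw (Module.End.mem_eigenspace_iff.mp (h ▸ Submodule.mem_top : w ∈ E))
    have hElt : Module.finrank ℂ E ≤ n := by
      have := Submodule.finrank_lt (K := ℂ) (V := W) hEtop
      omega
    obtain ⟨w₁, hw₁⟩ := hμ.exists_hasEigenvector
    have hw₁E : w₁ ∈ E := hw₁.1
    obtain ⟨w, hw0, hw⟩ := ih hElt (fun i => (T i).restrict (hmap i))
      (fun i j => by
        ext x
        have := DFunLike.congr_fun (hT i j) (x : W)
        simpa [Module.End.mul_apply, LinearMap.restrict_apply] using this)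
      ⟨w₁, hw₁E⟩ (by simpa using hw₁.2)
    refine ⟨(w : W), by simpa using hw0, fun i => (hw i).imp fun c h => ?_⟩
    have := congrArg Subtype.val h
    simpa [LinearMap.restrict_apply] using this

end Aux

/-- If `N` is a normal subgroup of a finite group `G` with abelian
quotient and `π` is an irreducible complex representation of `N`, then all irreducible
constituents of `Ind_N^G π` occur with the same multiplicity; equivalently, by Frobenius
reciprocity, for irreducible representations `σ`, `τ` of `G` both containing `π` on
restriction to `N`, `dim Hom_N(π, Res σ) = dim Hom_N(π, Res τ)`. -/
theorem multiplicity_in_induced_constant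
    {G : Type*} [Group G] [Finite G] (N : Subgroup G) [N.Normal]
    (hab : ∀ a b : G ⧸ N, a * b = b * a)
    {V V₁ V₂ : Type*}
    [AddCommGroup V] [Module ℂ V] [FiniteDimensional ℂ V]
    [AddCommGroup V₁] [Module ℂ V₁] [FiniteDimensional ℂ V₁]
    [AddCommGroup V₂] [Module ℂ V₂] [FiniteDimensional ℂ V₂]
    (π : Representation ℂ N V) (hπ : IsIrreducibleRep π)
    (σ : Representation ℂ G V₁) (hσ : IsIrreducibleRep σ)
    (τ : Representation ℂ G V₂) (hτ : IsIrreducibleRep τ)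
    (h₁ : equivariantHoms π (σ.comp N.subtype) ≠ ⊥)
    (h₂ : equivariantHoms π (τ.comp N.subtype) ≠ ⊥) :
    Module.finrank ℂ (equivariantHoms π (σ.comp N.subtype)) =
      Module.finrank ℂ (equivariantHoms π (τ.comp N.subtype)) := by
  classical
  -- extract nonzero equivariant maps
  obtain ⟨a, haW, ha0⟩ := (Submodule.ne_bot_iff _).mp h₁
  obtain ⟨b, hbW, hb0⟩ := (Submodule.ne_bot_iff _).mp h₂
  rw [mem_equivariantHoms] at haW hbW
  have haE : ∀ (n : N) (v : V), a (π n v) = σ ↑n (a v) := haW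
  have hbE : ∀ (n : N) (v : V), b (π n v) = τ ↑n (b v) := hbW
  have keyσ : ∀ (x y : G) (v : V₁), σ x (σ y v) = σ (x * y) v := fun x y v => by
    rw [map_mul]; rfl
  have keyτ : ∀ (x y : G) (v : V₂), τ x (τ y v) = τ (x * y) v := fun x y v => by
    rw [map_mul]; rfl
  -- a is injective
  have hkera : LinearMap.ker a = ⊥ := by
    rcases hπ.2 (LinearMap.ker a) (fun n v hv => by
      rw [LinearMap.mem_ker] at hv ⊢
      rw [haE n v, hv, map_zero]) with h | h
    · exact h
    · exact absurd (LinearMap.ker_eq_top.mp h) ha0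
  -- an N-equivariant retraction of a, by averaging
  obtain ⟨p, hp⟩ := a.exists_leftInverse_of_injective hkera
  haveI : Fintype N := Fintype.ofFinite N
  have hcard : ((Fintype.card N : ℕ) : ℂ) ≠ 0 := Nat.cast_ne_zero.mpr Fintype.card_ne_zero
  set pbar : V₁ →ₗ[ℂ] V :=
    ((Fintype.card N : ℕ) : ℂ)⁻¹ • ∑ n : N, (π n) ∘ₗ p ∘ₗ ((σ.comp N.subtype) n⁻¹) with hpbar
  have hterm : ∀ (n : N) (v : V₁),
      ((π n) ∘ₗ p ∘ₗ ((σ.comp N.subtype) n⁻¹)) v = π n (p (σ (↑n)⁻¹ v)) := fun n v => rfl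
  have hpbar_equiv : ∀ (m : N) (v : V₁), pbar (σ ↑m v) = π m (pbar v) := by
    intro m v
    rw [hpbar]
    simp only [LinearMap.smul_apply, LinearMap.sum_apply, map_smul, map_sum]
    congr 1
    refine Fintype.sum_equiv (Equiv.mulLeft m⁻¹) _ _ (fun k => ?_)
    simp only [Equiv.coe_mulLeft]
    rw [hterm, hterm]
    rw [keyσ, ← Module.End.mul_apply (π m), ← map_mul, mul_inv_cancel_left]
    have h1 : ((↑k : G))⁻¹ * ↑m = ((↑(m⁻¹ * k) : G))⁻¹ := by
      push_cast
      group
    rw [h1]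
  have hpa : ∀ v : V, pbar (a v) = v := by
    intro v
    rw [hpbar]
    simp only [LinearMap.smul_apply, LinearMap.sum_apply]
    have hh : ∀ n : N, ((π n) ∘ₗ p ∘ₗ ((σ.comp N.subtype) n⁻¹)) (a v) = v := by
      intro n
      rw [hterm]
      have h1 : σ (↑n)⁻¹ (a v) = a (π n⁻¹ v) := by
        rw [haE n⁻¹ v]; rfl
      rw [h1]
      have h2 : p (a (π n⁻¹ v)) = π n⁻¹ v := by
        have := DFunLike.congr_fun hp (π n⁻¹ v)
        simpa using this
      rw [h2, ← Module.End.mul_apply, ← map_mul, mul_inv_cancel, map_one,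
        Module.End.one_apply]
    rw [Finset.sum_congr rfl (fun n _ => hh n), Finset.sum_const, Finset.card_univ,
      ← Nat.cast_smul_eq_nsmul ℂ, smul_smul, inv_mul_cancel₀ hcard, one_smul]
  -- a nonzero N-equivariant map V₁ → V₂
  set f₀ : V₁ →ₗ[ℂ] V₂ := b ∘ₗ pbar with hf₀
  have hf₀W : f₀ ∈ equivariantHoms (σ.comp N.subtype) (τ.comp N.subtype) := by
    rw [mem_equivariantHoms]
    intro n v
    show b (pbar (σ ↑n v)) = τ ↑n (b (pbar v))
    rw [hpbar_equiv n v, hbE n (pbar v)]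
  have hf₀0 : f₀ ≠ 0 := by
    obtain ⟨v, hv⟩ := DFunLike.ne_iff.mp hb0
    intro h
    apply hv
    have := DFunLike.congr_fun h (a v)
    simpa [hf₀, hpa v] using this
  set WE := equivariantHoms (σ.comp N.subtype) (τ.comp N.subtype) with hWE
  have hfe : ∀ (f : WE) (n : N) (x : V₁),
      (f : V₁ →ₗ[ℂ] V₂) (σ ↑n x) = τ ↑n ((f : V₁ →ₗ[ℂ] V₂) x) := fun f n x => f.2 n x
  -- G acts on WE
  have hmemρ : ∀ (g : G) (f : WE), (τ g ∘ₗ (f : V₁ →ₗ[ℂ] V₂) ∘ₗ σ g⁻¹) ∈ WE := by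
    intro g f
    intro n v
    have hm : (g⁻¹ * ↑n * g) ∈ N := by
      have := ‹N.Normal›.conj_mem ↑n n.2 g⁻¹
      simpa using this
    show τ g ((f : V₁ →ₗ[ℂ] V₂) (σ g⁻¹ (σ ↑n v)))
        = τ ↑n (τ g ((f : V₁ →ₗ[ℂ] V₂) (σ g⁻¹ v)))
    have e1 : σ g⁻¹ (σ ↑n v) = σ ↑(⟨g⁻¹ * ↑n * g, hm⟩ : N) (σ g⁻¹ v) := by
      rw [keyσ, keyσ, show ((↑(⟨g⁻¹ * ↑n * g, hm⟩ : N) : G)) = g⁻¹ * ↑n * g from rfl,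
        show (g⁻¹ * ↑n * g) * g⁻¹ = g⁻¹ * (↑n : G) by group]
    rw [e1, hfe f ⟨g⁻¹ * ↑n * g, hm⟩ (σ g⁻¹ v), keyτ, keyτ,
      show ((↑(⟨g⁻¹ * ↑n * g, hm⟩ : N) : G)) = g⁻¹ * ↑n * g from rfl,
      show g * (g⁻¹ * ↑n * g) = (↑n : G) * g by group]
  let ρ : G → Module.End ℂ WE := fun g =>
    { toFun := fun f => ⟨τ g ∘ₗ (f : V₁ →ₗ[ℂ] V₂) ∘ₗ σ g⁻¹, hmemρ g f⟩
      map_add' := fun f₁ f₂ => by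
        apply Subtype.ext
        ext v
        simp
      map_smul' := fun cc ff => by
        apply Subtype.ext
        ext v
        simp }
  have hρval : ∀ (g : G) (f : WE) (v : V₁),
      ((ρ g f : WE) : V₁ →ₗ[ℂ] V₂) v = τ g ((f : V₁ →ₗ[ℂ] V₂) (σ g⁻¹ v)) := fun g f v => rfl
  have hcomm : ∀ g h : G, Commute (ρ g) (ρ h) := by
    intro g h
    show ρ g * ρ h = ρ h * ρ g
    apply LinearMap.ext
    intro f
    apply Subtype.ext
    apply LinearMap.ext
    intro v
    have hn : ((g * h)⁻¹ * (h * g)) ∈ N := by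
      have := hab (QuotientGroup.mk g) (QuotientGroup.mk h)
      rw [← QuotientGroup.mk_mul, ← QuotientGroup.mk_mul] at this
      exact (QuotientGroup.eq (s := N)).mp this
    set n₀ : N := ⟨(g * h)⁻¹ * (h * g), hn⟩ with hn₀
    show ((ρ g (ρ h f) : WE) : V₁ →ₗ[ℂ] V₂) v = ((ρ h (ρ g f) : WE) : V₁ →ₗ[ℂ] V₂) v
    rw [hρval, hρval, hρval, hρval]
    rw [keyσ h⁻¹ g⁻¹, keyσ g⁻¹ h⁻¹]
    have e2 : σ (g⁻¹ * h⁻¹) v = σ ↑n₀⁻¹ (σ (h⁻¹ * g⁻¹) v) := by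
      rw [keyσ, show ((↑(n₀⁻¹) : G)) = ((g * h)⁻¹ * (h * g))⁻¹ from rfl,
        show ((g * h)⁻¹ * (h * g))⁻¹ * (h⁻¹ * g⁻¹) = g⁻¹ * h⁻¹ by group]
    rw [e2, hfe f n₀⁻¹ (σ (h⁻¹ * g⁻¹) v), keyτ g h,
      show ((↑(n₀⁻¹) : G)) = ((g * h)⁻¹ * (h * g))⁻¹ from rfl,
      keyτ g ((g * h)⁻¹ * (h * g))⁻¹, keyτ h (g * ((g * h)⁻¹ * (h * g))⁻¹),
      show h * (g * ((g * h)⁻¹ * (h * g))⁻¹) = g * h by group]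
  haveI : FiniteDimensional ℂ WE := by infer_instance
  obtain ⟨F, hF0, hFeig⟩ := exists_common_eigenvector (Module.finrank ℂ WE) le_rfl ρ hcomm
    ⟨f₀, hf₀W⟩ (by
      intro h
      exact hf₀0 (congrArg Subtype.val h))
  choose c hc using hFeig
  set f : V₁ →ₗ[ℂ] V₂ := (F : V₁ →ₗ[ℂ] V₂) with hfdef
  have hfne : f ≠ 0 := fun h => hF0 (Subtype.ext h)
  have hfeq : ∀ g v, τ g (f (σ g⁻¹ v)) = c g • f v := by
    intro g v
    have h1 := congrArg Subtype.val (hc g)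
    have h2 := DFunLike.congr_fun h1 v
    rw [hρval] at h2
    simpa using h2
  have hfeq2 : ∀ g w, τ g (f w) = c g • f (σ g w) := by
    intro g w
    have := hfeq g (σ g w)
    rw [keyσ g⁻¹ g, inv_mul_cancel, map_one, Module.End.one_apply] at this
    exact this
  have hτinj : ∀ (g : G) (w : V₂), τ g w = 0 → w = 0 := by
    intro g w hw
    have := congrArg (τ g⁻¹) hw
    rw [keyτ, inv_mul_cancel, map_one, Module.End.one_apply, map_zero] at this
    exact this
  have hcne : ∀ g, c g ≠ 0 := by
    intro g hg
    apply hfne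
    ext w
    have := hfeq2 g w
    rw [hg, zero_smul] at this
    simpa using hτinj g (f w) this
  -- f is bijective by Schur
  have hker : LinearMap.ker f = ⊥ := by
    rcases hσ.2 (LinearMap.ker f) (fun g v hv => by
      rw [LinearMap.mem_ker] at hv ⊢
      have := hfeq2 g v
      rw [hv, map_zero] at this
      exact ((smul_eq_zero.mp this.symm).resolve_left (hcne g))) with h | h
    · exact h
    · exact absurd (LinearMap.ker_eq_top.mp h) hfne
  have hrange : LinearMap.range f = ⊤ := by
    rcases hτ.2 (LinearMap.range f) (fun g w hw => by
      obtain ⟨v, rfl⟩ := hw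
      refine ⟨c g • σ g v, ?_⟩
      rw [map_smul, ← hfeq2 g v]) with h | h
    · exact absurd (LinearMap.range_eq_bot.mp h) hfne
    · exact h
  have hbij : Function.Bijective f :=
    ⟨LinearMap.ker_eq_bot.mp hker, LinearMap.range_eq_top.mp hrange⟩
  let e : V₁ ≃ₗ[ℂ] V₂ := LinearEquiv.ofBijective f hbij
  have he : ∀ v, e v = f v := fun v => rfl
  have hfN : ∀ (n : N) (v : V₁), f (σ ↑n v) = τ ↑n (f v) := fun n v => hfe F n v
  have hsymm : ∀ (n : N) (w : V₂), e.symm (τ ↑n w) = σ ↑n (e.symm w) := by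
    intro n w
    apply e.injective
    rw [e.apply_symm_apply, he, hfN n (e.symm w), ← he, e.apply_symm_apply]
  -- the final linear equivalence between Hom-spaces
  have hΦmem : ∀ h : equivariantHoms π (σ.comp N.subtype),
      (f ∘ₗ (h : V →ₗ[ℂ] V₁)) ∈ equivariantHoms π (τ.comp N.subtype) := by
    intro h
    rw [mem_equivariantHoms]
    intro n v
    show f ((h : V →ₗ[ℂ] V₁) (π n v)) = τ ↑n (f ((h : V →ₗ[ℂ] V₁) v))
    rw [h.2 n v]
    exact hfN n _
  have hΨmem : ∀ h : equivariantHoms π (τ.comp N.subtype),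
      (e.symm.toLinearMap ∘ₗ (h : V →ₗ[ℂ] V₂)) ∈ equivariantHoms π (σ.comp N.subtype) := by
    intro h
    rw [mem_equivariantHoms]
    intro n v
    show e.symm ((h : V →ₗ[ℂ] V₂) (π n v)) = σ ↑n (e.symm ((h : V →ₗ[ℂ] V₂) v))
    rw [h.2 n v]
    exact hsymm n _
  let Φ : (equivariantHoms π (σ.comp N.subtype)) ≃ₗ[ℂ] (equivariantHoms π (τ.comp N.subtype)) :=
    { toFun := fun h => ⟨f ∘ₗ (h : V →ₗ[ℂ] V₁), hΦmem h⟩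
      invFun := fun h => ⟨e.symm.toLinearMap ∘ₗ (h : V →ₗ[ℂ] V₂), hΨmem h⟩
      map_add' := fun h₁ h₂ => by
        apply Subtype.ext
        ext v
        simp
      map_smul' := fun cc h => by
        apply Subtype.ext
        ext v
        simp
      left_inv := fun h => by
        apply Subtype.ext
        ext v
        show e.symm (f ((h : V →ₗ[ℂ] V₁) v)) = (h : V →ₗ[ℂ] V₁) v
        rw [← he, e.symm_apply_apply]
      right_inv := fun h => by
        apply Subtype.ext
        ext v
        show f (e.symm ((h : V →ₗ[ℂ] V₂) v)) = (h : V →ₗ[ℂ] V₂) v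
        rw [← he, e.apply_symm_apply] }
  exact Φ.finrank_eq


end RestrictionMult
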